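/- Let n ≥ 2 and let κ₁,…,κ_{n−1} and c₁,…,c_{n−1} be positive real numbers with Σ_{i=1}^{n−1} c_i/κ_i < 1. Let ℳ = {(𝐪, p) ∈ ℝⁿ × ℝ^{n−1} : 𝐪₁² + … + 𝐪_n² = 1} and ℳ_c = {(𝐪,p) ∈ ℳ : p_i² + κ_i 𝐪_i² = c_i for i = 1,…,n−1}. Then: (i) every point of ℳ_c satisfies 𝐪_n² ≥ 1 − Σ c_i/κ_i > 0, so ℳ_c does not meet {𝐪_n = 0}; (ii) ℳ_c is the disjoint union of the two nonempty sets ℳ_c⁺ = ℳ_c ∩ {𝐪_n > 0} and ℳ_c⁻ = ℳ_c ∩ {𝐪_n < 0}, each of which is both open and closed in ℳ_c; and (iii) each of ℳ_c⁺ and ℳ_c⁻ is homeomorphic to the (n−1)-dimensional torus, i.e. to the product of n−1 circles Π_{i=1}^{n−1}{(x,y) ∈ ℝ² : x² + y² = 1}. -/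

import Mathlib

open Matrix Set

noncomputable section KTHelpers

/-- A circle–ellipse homeomorphism. -/
def ellipseHomeo (κ c : ℝ) (hκ : 0 < κ) (hc : 0 < c) :
    {y : ℝ × ℝ // y.2 ^ 2 + κ * y.1 ^ 2 = c} ≃ₜ {y : ℝ × ℝ // y.1 ^ 2 + y.2 ^ 2 = 1} where
  toFun y := ⟨(Real.sqrt κ * y.1.1 / Real.sqrt c, y.1.2 / Real.sqrt c), by
    have hκ' := Real.sq_sqrt hκ.le
    have hc' := Real.sq_sqrt hc.le
    have hc0 : Real.sqrt c ≠ 0 := by positivity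
    have h := y.2
    field_simp
    nlinarith [h]⟩
  invFun y := ⟨(Real.sqrt c * y.1.1 / Real.sqrt κ, Real.sqrt c * y.1.2), by
    have hκ' := Real.sq_sqrt hκ.le
    have hc' := Real.sq_sqrt hc.le
    have hκ0 : Real.sqrt κ ≠ 0 := by positivity
    have h := y.2
    field_simp
    rw [hκ', hc']
    linear_combination (κ * c) * h⟩
  left_inv y := by
    have hκ0 : Real.sqrt κ ≠ 0 := by positivity
    have hc0 : Real.sqrt c ≠ 0 := by positivity
    apply Subtype.ext
    apply Prod.ext <;> simp <;> field_simp
  right_inv y := by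
    have hκ0 : Real.sqrt κ ≠ 0 := by positivity
    have hc0 : Real.sqrt c ≠ 0 := by positivity
    apply Subtype.ext
    apply Prod.ext <;> simp <;> field_simp
  continuous_toFun := by fun_prop
  continuous_invFun := by fun_prop

variable {m : ℕ} (κ c : Fin m → ℝ)

lemma kt_sum_sq_lt (hκ : ∀ i, 0 < κ i) (hsum : ∑ i, c i / κ i < 1)
    (e : ∀ i : Fin m, {y : ℝ × ℝ // y.2 ^ 2 + κ i * y.1 ^ 2 = c i}) :
    ∑ i, (e i).1.1 ^ 2 < 1 := by
  refine lt_of_le_of_lt (Finset.sum_le_sum fun i _ => ?_) hsum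
  have h := (e i).2
  rw [le_div_iff₀ (hκ i)]
  nlinarith [sq_nonneg (e i).1.2]

lemma kt_qlast_bound (hκ : ∀ i, 0 < κ i) (x : (Fin (m+1) → ℝ) × (Fin m → ℝ))
    (hx : (∑ j, x.1 j ^ 2 = 1) ∧ ∀ i : Fin m, x.2 i ^ 2 + κ i * x.1 i.castSucc ^ 2 = c i) :
    1 - ∑ i, c i / κ i ≤ x.1 (Fin.last m) ^ 2 := by
  obtain ⟨h1, h2⟩ := hx
  rw [Fin.sum_univ_castSucc] at h1
  have hle : ∑ i : Fin m, x.1 i.castSucc ^ 2 ≤ ∑ i, c i / κ i := by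
    refine Finset.sum_le_sum fun i _ => ?_
    have h := h2 i
    rw [le_div_iff₀ (hκ i)]
    nlinarith [sq_nonneg (x.2 i)]
  linarith

def mcHomeo (hκ : ∀ i, 0 < κ i) (hc : ∀ i, 0 < c i)
    (hsum : ∑ i, c i / κ i < 1) (s : ℝ) (hs : s = 1 ∨ s = -1) :
    {x : (Fin (m+1) → ℝ) × (Fin m → ℝ) //
      ((∑ j, x.1 j ^ 2 = 1) ∧ ∀ i : Fin m, x.2 i ^ 2 + κ i * x.1 i.castSucc ^ 2 = c i) ∧
        0 < s * x.1 (Fin.last m)} ≃ₜ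
    (∀ i : Fin m, {y : ℝ × ℝ // y.2 ^ 2 + κ i * y.1 ^ 2 = c i}) where
  toFun x i := ⟨(x.1.1 i.castSucc, x.1.2 i), x.2.1.2 i⟩
  invFun e := by
    have hs2 : s ^ 2 = 1 := by rcases hs with h | h <;> rw [h] <;> norm_num
    have hpos : 0 < 1 - ∑ i, (e i).1.1 ^ 2 := by
      have := kt_sum_sq_lt κ c hκ hsum e; linarith
    refine ⟨(Fin.snoc (fun i => (e i).1.1) (s * Real.sqrt (1 - ∑ i, (e i).1.1 ^ 2)),
        fun i => (e i).1.2), ⟨?_, ?_⟩, ?_⟩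
    · rw [Fin.sum_univ_castSucc]
      simp only [Fin.snoc_castSucc, Fin.snoc_last]
      rw [mul_pow, Real.sq_sqrt hpos.le, hs2]
      ring
    · intro i
      simp only [Fin.snoc_castSucc]
      exact (e i).2
    · simp only [Fin.snoc_last]
      have := Real.sqrt_pos.mpr hpos
      nlinarith
  left_inv x := by
    obtain ⟨⟨q, p⟩, ⟨hsum1, hell⟩, hsgn⟩ := x
    apply Subtype.ext
    apply Prod.ext
    · funext j
      simp only
      induction j using Fin.lastCases with
      | cast i => rw [Fin.snoc_castSucc]
      | last =>
        rw [Fin.snoc_last]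
        have hsq : 1 - ∑ i : Fin m, q i.castSucc ^ 2 = q (Fin.last m) ^ 2 := by
          rw [Fin.sum_univ_castSucc] at hsum1; linarith
        rw [hsq, Real.sqrt_sq_eq_abs]
        rcases hs with h1 | h1 <;> subst h1
        · rw [one_mul] at hsgn ⊢; exact abs_of_pos hsgn
        · rw [neg_one_mul] at hsgn ⊢
          rw [abs_of_neg (by linarith), neg_neg]
    · rfl
  right_inv e := by
    funext i
    apply Subtype.ext
    apply Prod.ext
    · simp only
      rw [Fin.snoc_castSucc]
    · rfl
  continuous_toFun := by
    refine continuous_pi fun i => Continuous.subtype_mk ?_ _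
    exact ((continuous_apply _).comp (continuous_fst.comp continuous_subtype_val)).prodMk
      ((continuous_apply _).comp (continuous_snd.comp continuous_subtype_val))
  continuous_invFun := by
    refine Continuous.subtype_mk (Continuous.prodMk (continuous_pi fun j => ?_)
      (continuous_pi fun i => ?_)) _
    · induction j using Fin.lastCases with
      | cast i =>
        simp only [Fin.snoc_castSucc]
        exact continuous_fst.comp ((continuous_subtype_val).comp (continuous_apply _))
      | last =>
        simp only [Fin.snoc_last]
        refine continuous_const.mul (Real.continuous_sqrt.comp ?_)
        refine continuous_const.sub (continuous_finset_sum _ fun i _ => ?_)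
        exact (continuous_fst.comp ((continuous_subtype_val).comp (continuous_apply _))).pow 2
    · exact continuous_snd.comp ((continuous_subtype_val).comp (continuous_apply _))

/-- The full homeomorphism with the torus. -/
def mcHomeoTorus (hκ : ∀ i, 0 < κ i) (hc : ∀ i, 0 < c i)
    (hsum : ∑ i, c i / κ i < 1) (s : ℝ) (hs : s = 1 ∨ s = -1) :
    {x : (Fin (m+1) → ℝ) × (Fin m → ℝ) //
      ((∑ j, x.1 j ^ 2 = 1) ∧ ∀ i : Fin m, x.2 i ^ 2 + κ i * x.1 i.castSucc ^ 2 = c i) ∧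
        0 < s * x.1 (Fin.last m)} ≃ₜ
    (∀ _ : Fin m, {y : ℝ × ℝ // y.1 ^ 2 + y.2 ^ 2 = 1}) :=
  (mcHomeo κ c hκ hc hsum s hs).trans
    (Homeomorph.piCongrRight fun i => ellipseHomeo (κ i) (c i) (hκ i) (hc i))

end KTHelpers

/-- Theorem 4 of the paper (Klebsh–Tisserand case): if `Σ c_i/κ_i < 1` (with all
`κ_i, c_i > 0`), then on the invariant set
`ℳ_c = {(𝐪,p) ∈ S^{n−1} × ℝ^{n−1} : p_i² + κ_i 𝐪_i² = c_i}` one has `𝐪_n ≠ 0`,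
`ℳ_c` splits into the two nonempty clopen pieces `{𝐪_n > 0}` and `{𝐪_n < 0}`, and each
piece is homeomorphic to the `(n−1)`-dimensional torus (a product of `n−1` circles). -/
theorem klebsh_tisserand_invariant_tori (n : ℕ) (hn : 2 ≤ n)
    (κ c : Fin (n - 1) → ℝ) (hκ : ∀ i, 0 < κ i) (hc : ∀ i, 0 < c i)
    (hsum : ∑ i, c i / κ i < 1) :
    (∀ x : (Fin n → ℝ) × (Fin (n - 1) → ℝ),
      x ∈ {x : (Fin n → ℝ) × (Fin (n - 1) → ℝ) |
          (∑ j, x.1 j ^ 2 = 1) ∧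
          ∀ i : Fin (n - 1), x.2 i ^ 2 + κ i * x.1 (Fin.castLE (Nat.sub_le n 1) i) ^ 2 = c i} →
        0 < 1 - ∑ i, c i / κ i ∧
        1 - ∑ i, c i / κ i ≤ x.1 ⟨n - 1, by omega⟩ ^ 2 ∧
        x.1 ⟨n - 1, by omega⟩ ≠ 0) ∧
    ({x : (Fin n → ℝ) × (Fin (n - 1) → ℝ) |
        ((∑ j, x.1 j ^ 2 = 1) ∧
          ∀ i : Fin (n - 1), x.2 i ^ 2 + κ i * x.1 (Fin.castLE (Nat.sub_le n 1) i) ^ 2 = c i)} =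
      {x : (Fin n → ℝ) × (Fin (n - 1) → ℝ) |
        ((∑ j, x.1 j ^ 2 = 1) ∧
          ∀ i : Fin (n - 1), x.2 i ^ 2 + κ i * x.1 (Fin.castLE (Nat.sub_le n 1) i) ^ 2 = c i) ∧
          0 < x.1 ⟨n - 1, by omega⟩} ∪
      {x : (Fin n → ℝ) × (Fin (n - 1) → ℝ) |
        ((∑ j, x.1 j ^ 2 = 1) ∧
          ∀ i : Fin (n - 1), x.2 i ^ 2 + κ i * x.1 (Fin.castLE (Nat.sub_le n 1) i) ^ 2 = c i) ∧
          x.1 ⟨n - 1, by omega⟩ < 0}) ∧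
    Disjoint
      {x : (Fin n → ℝ) × (Fin (n - 1) → ℝ) |
        ((∑ j, x.1 j ^ 2 = 1) ∧
          ∀ i : Fin (n - 1), x.2 i ^ 2 + κ i * x.1 (Fin.castLE (Nat.sub_le n 1) i) ^ 2 = c i) ∧
          0 < x.1 ⟨n - 1, by omega⟩}
      {x : (Fin n → ℝ) × (Fin (n - 1) → ℝ) |
        ((∑ j, x.1 j ^ 2 = 1) ∧
          ∀ i : Fin (n - 1), x.2 i ^ 2 + κ i * x.1 (Fin.castLE (Nat.sub_le n 1) i) ^ 2 = c i) ∧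
          x.1 ⟨n - 1, by omega⟩ < 0} ∧
    {x : (Fin n → ℝ) × (Fin (n - 1) → ℝ) |
        ((∑ j, x.1 j ^ 2 = 1) ∧
          ∀ i : Fin (n - 1), x.2 i ^ 2 + κ i * x.1 (Fin.castLE (Nat.sub_le n 1) i) ^ 2 = c i) ∧
          0 < x.1 ⟨n - 1, by omega⟩}.Nonempty ∧
    {x : (Fin n → ℝ) × (Fin (n - 1) → ℝ) |
        ((∑ j, x.1 j ^ 2 = 1) ∧
          ∀ i : Fin (n - 1), x.2 i ^ 2 + κ i * x.1 (Fin.castLE (Nat.sub_le n 1) i) ^ 2 = c i) ∧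
          x.1 ⟨n - 1, by omega⟩ < 0}.Nonempty ∧
    IsClopen {y : {x : (Fin n → ℝ) × (Fin (n - 1) → ℝ) |
          (∑ j, x.1 j ^ 2 = 1) ∧
          ∀ i : Fin (n - 1), x.2 i ^ 2 + κ i * x.1 (Fin.castLE (Nat.sub_le n 1) i) ^ 2 = c i} |
        0 < (y : (Fin n → ℝ) × (Fin (n - 1) → ℝ)).1 ⟨n - 1, by omega⟩} ∧
    IsClopen {y : {x : (Fin n → ℝ) × (Fin (n - 1) → ℝ) |
          (∑ j, x.1 j ^ 2 = 1) ∧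
          ∀ i : Fin (n - 1), x.2 i ^ 2 + κ i * x.1 (Fin.castLE (Nat.sub_le n 1) i) ^ 2 = c i} |
        (y : (Fin n → ℝ) × (Fin (n - 1) → ℝ)).1 ⟨n - 1, by omega⟩ < 0} ∧
    Nonempty
      ({x : (Fin n → ℝ) × (Fin (n - 1) → ℝ) //
          ((∑ j, x.1 j ^ 2 = 1) ∧
            ∀ i : Fin (n - 1), x.2 i ^ 2 + κ i * x.1 (Fin.castLE (Nat.sub_le n 1) i) ^ 2 = c i) ∧
            0 < x.1 ⟨n - 1, by omega⟩} ≃ₜ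
        (∀ _ : Fin (n - 1), {y : ℝ × ℝ // y.1 ^ 2 + y.2 ^ 2 = 1})) ∧
    Nonempty
      ({x : (Fin n → ℝ) × (Fin (n - 1) → ℝ) //
          ((∑ j, x.1 j ^ 2 = 1) ∧
            ∀ i : Fin (n - 1), x.2 i ^ 2 + κ i * x.1 (Fin.castLE (Nat.sub_le n 1) i) ^ 2 = c i) ∧
            x.1 ⟨n - 1, by omega⟩ < 0} ≃ₜ
        (∀ _ : Fin (n - 1), {y : ℝ × ℝ // y.1 ^ 2 + y.2 ^ 2 = 1})) := by
  obtain ⟨m, rfl⟩ : ∃ m, n = m + 1 := ⟨n - 1, by omega⟩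
  have hpos : 0 < 1 - ∑ i, c i / κ i := by linarith
  -- part (i)
  have part1 : ∀ x : (Fin (m+1) → ℝ) × (Fin m → ℝ),
      ((∑ j, x.1 j ^ 2 = 1) ∧
        ∀ i : Fin m, x.2 i ^ 2 + κ i * x.1 i.castSucc ^ 2 = c i) →
      0 < 1 - ∑ i, c i / κ i ∧
      1 - ∑ i, c i / κ i ≤ x.1 (Fin.last m) ^ 2 ∧ x.1 (Fin.last m) ≠ 0 := by
    intro x hx
    have hb : 1 - ∑ i, c i / κ i ≤ x.1 (Fin.last m) ^ 2 := kt_qlast_bound κ c hκ x hx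
    refine ⟨hpos, hb, fun h0 => ?_⟩
    rw [h0] at hb
    simp at hb
    have hb' : (1:ℝ) ≤ ∑ i : Fin (m + 1 - 1), c i / κ i := hb
    linarith
  -- homeomorphisms
  have e1 : {x : (Fin (m+1) → ℝ) × (Fin m → ℝ) |
      ((∑ j, x.1 j ^ 2 = 1) ∧
        ∀ i : Fin m, x.2 i ^ 2 + κ i * x.1 i.castSucc ^ 2 = c i) ∧
        0 < x.1 (Fin.last m)} =
      {x : (Fin (m+1) → ℝ) × (Fin m → ℝ) |
      ((∑ j, x.1 j ^ 2 = 1) ∧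
        ∀ i : Fin m, x.2 i ^ 2 + κ i * x.1 i.castSucc ^ 2 = c i) ∧
        0 < (1:ℝ) * x.1 (Fin.last m)} := by
    ext x; simp only [mem_setOf_eq, one_mul]
  have e2 : {x : (Fin (m+1) → ℝ) × (Fin m → ℝ) |
      ((∑ j, x.1 j ^ 2 = 1) ∧
        ∀ i : Fin m, x.2 i ^ 2 + κ i * x.1 i.castSucc ^ 2 = c i) ∧
        x.1 (Fin.last m) < 0} =
      {x : (Fin (m+1) → ℝ) × (Fin m → ℝ) |
      ((∑ j, x.1 j ^ 2 = 1) ∧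
        ∀ i : Fin m, x.2 i ^ 2 + κ i * x.1 i.castSucc ^ 2 = c i) ∧
        0 < (-1:ℝ) * x.1 (Fin.last m)} := by
    ext x; simp only [mem_setOf_eq, neg_one_mul, neg_pos]
  have Hpos := (Homeomorph.setCongr e1).trans
    (mcHomeoTorus κ c hκ hc hsum 1 (Or.inl rfl))
  have Hneg := (Homeomorph.setCongr e2).trans
    (mcHomeoTorus κ c hκ hc hsum (-1) (Or.inr rfl))
  have torpt : ∀ _ : Fin m, {y : ℝ × ℝ // y.1 ^ 2 + y.2 ^ 2 = 1} :=
    fun _ => ⟨(1, 0), by norm_num⟩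
  -- continuity of the last-coordinate evaluation on ℳ
  have hf : Continuous (fun y : {x : (Fin (m+1) → ℝ) × (Fin m → ℝ) |
      (∑ j, x.1 j ^ 2 = 1) ∧
        ∀ i : Fin m, x.2 i ^ 2 + κ i * x.1 i.castSucc ^ 2 = c i} =>
      (y : (Fin (m+1) → ℝ) × (Fin m → ℝ)).1 (Fin.last m)) :=
    (continuous_apply _).comp (continuous_fst.comp continuous_subtype_val)
  refine ⟨part1, ?_, ?_, ?_, ?_, ?_, ?_, ⟨Hpos⟩, ⟨Hneg⟩⟩
  · -- set splitting
    ext x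
    simp only [mem_setOf_eq, mem_union]
    constructor
    · intro hx
      rcases lt_trichotomy (x.1 (Fin.last m)) 0 with h | h | h
      · exact Or.inr ⟨hx, h⟩
      · exact absurd h (part1 x hx).2.2
      · exact Or.inl ⟨hx, h⟩
    · rintro (⟨h, _⟩ | ⟨h, _⟩) <;> exact h
  · -- disjoint
    rw [Set.disjoint_left]
    rintro x ⟨_, h1⟩ ⟨_, h2⟩
    exact absurd h1 (not_lt.mpr h2.le)
  · -- nonempty positive
    exact ⟨(Hpos.symm torpt).1, (Hpos.symm torpt).2⟩
  · -- nonempty negative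
    exact ⟨(Hneg.symm torpt).1, (Hneg.symm torpt).2⟩
  · -- clopen positive
    constructor
    · have heq : {y : {x : (Fin (m+1) → ℝ) × (Fin m → ℝ) |
          (∑ j, x.1 j ^ 2 = 1) ∧
            ∀ i : Fin m, x.2 i ^ 2 + κ i * x.1 i.castSucc ^ 2 = c i} |
          0 < (y : (Fin (m+1) → ℝ) × (Fin m → ℝ)).1 (Fin.last m)} =
          {y : {x : (Fin (m+1) → ℝ) × (Fin m → ℝ) |
          (∑ j, x.1 j ^ 2 = 1) ∧
            ∀ i : Fin m, x.2 i ^ 2 + κ i * x.1 i.castSucc ^ 2 = c i} |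
          0 ≤ (y : (Fin (m+1) → ℝ) × (Fin m → ℝ)).1 (Fin.last m)} := by
        ext y
        simp only [mem_setOf_eq]
        exact ⟨le_of_lt, fun h => h.lt_of_ne' (part1 y.1 y.2).2.2⟩
      show IsClosed {y : {x : (Fin (m+1) → ℝ) × (Fin m → ℝ) |
          (∑ j, x.1 j ^ 2 = 1) ∧
            ∀ i : Fin m, x.2 i ^ 2 + κ i * x.1 i.castSucc ^ 2 = c i} |
          0 < (y : (Fin (m+1) → ℝ) × (Fin m → ℝ)).1 (Fin.last m)}
      rw [heq]
      exact isClosed_le continuous_const hf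
    · exact isOpen_lt continuous_const hf
  · -- clopen negative
    constructor
    · have heq : {y : {x : (Fin (m+1) → ℝ) × (Fin m → ℝ) |
          (∑ j, x.1 j ^ 2 = 1) ∧
            ∀ i : Fin m, x.2 i ^ 2 + κ i * x.1 i.castSucc ^ 2 = c i} |
          (y : (Fin (m+1) → ℝ) × (Fin m → ℝ)).1 (Fin.last m) < 0} =
          {y : {x : (Fin (m+1) → ℝ) × (Fin m → ℝ) |
          (∑ j, x.1 j ^ 2 = 1) ∧
            ∀ i : Fin m, x.2 i ^ 2 + κ i * x.1 i.castSucc ^ 2 = c i} |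
          (y : (Fin (m+1) → ℝ) × (Fin m → ℝ)).1 (Fin.last m) ≤ 0} := by
        ext y
        simp only [mem_setOf_eq]
        exact ⟨le_of_lt, fun h => h.lt_of_ne (part1 y.1 y.2).2.2⟩
      show IsClosed {y : {x : (Fin (m+1) → ℝ) × (Fin m → ℝ) |
          (∑ j, x.1 j ^ 2 = 1) ∧
            ∀ i : Fin m, x.2 i ^ 2 + κ i * x.1 i.castSucc ^ 2 = c i} |
          (y : (Fin (m+1) → ℝ) × (Fin m → ℝ)).1 (Fin.last m) < 0}
      rw [heq]
      exact isClosed_le hf continuous_const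
    · exact isOpen_lt hf continuous_const
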